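/- Let P = T(V) with differential b₃ as above, and let S₂ act on P by σ(v₁⋯vₙ) = (-1)^{n(n-1)/2} v̄ₙ⋯v̄₁ (with ā = b, b̄ = a) and σ(1)=1. Then the complex of coinvariants P_{S₂} is acyclic. -/
import Mathlib

set_option linter.unusedSectionVars false

/-- The degree-`n` component `V^{⊗n}` for `V = span{a,b}` (a, b of degree 1),
realized as functions on words of length `n` over `{a,b}` (encoded as `Bool`,
with `false ↦ a`, `true ↦ b`); the degree-0 component of `T(V)` is `K`. -/
abbrev Wd (K : Type) (n : ℕ) := (Fin n → Bool) → K

/-- The differential `b₃` in positive degrees: insertion of `a+b` at the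
internal positions `i = 1, …, n-1` with signs `(-1)^{i+1}`; it vanishes on
degree 1, so `b₃(a) = b₃(b) = 0`. -/
def b3 (K : Type) [Field K] (n : ℕ) (X : Wd K n) : Wd K (n + 1) :=
  fun w => ∑ p : Fin (n + 1),
    (if (p : ℕ) = 0 ∨ (p : ℕ) = n then 0 else (-1 : K) ^ ((p : ℕ) + 1))
      * X (fun j => w (p.succAbove j))

/-- The differential `b₃` on the degree-0 component: `b₃(1) = (a+b)/2`. -/
def b3zero (K : Type) [Field K] (c : K) : Wd K 1 := fun _ => c / 2

/-- The `S₂`-action `σ(v₁⋯vₙ) = (-1)^{n(n-1)/2} v̄ₙ⋯v̄₁` (with `ā = b`, `b̄ = a`)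
on `V^{⊗n}`; on the degree-0 component `σ(1) = 1`, so the degree-0 relations
are trivial. -/
def sigmaRev (K : Type) [Field K] (n : ℕ) (X : Wd K n) : Wd K n :=
  fun w => (-1 : K) ^ (n * (n - 1) / 2) * X (fun j => ! w (Fin.rev j))

/-- The relation submodule defining the coinvariants `(V^{⊗n})_{S₂}`:
the span of all elements `Y - σ(Y)`. -/
def Nsig (K : Type) [Field K] (n : ℕ) : Submodule K (Wd K n) :=
  Submodule.span K {Z : Wd K n | ∃ Y : Wd K n, Z = Y - sigmaRev K n Y}

/-! ### Auxiliary material -/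

section Fin
/-- Value of `Fin.succAbove`. -/
lemma succAbove_val {m : ℕ} (p : Fin (m+1)) (j : Fin m) :
    ((p.succAbove j) : ℕ) = if (j:ℕ) < (p:ℕ) then (j:ℕ) else (j:ℕ)+1 := by
  rcases Nat.lt_or_ge (j:ℕ) (p:ℕ) with h | h
  · rw [Fin.succAbove_of_castSucc_lt _ _ (by simpa [Fin.lt_def] using h), if_pos h]; rfl
  · rw [Fin.succAbove_of_le_castSucc _ _ (by simpa [Fin.le_def] using h),
      if_neg (Nat.not_lt.mpr h)]; rfl

/-- Insertion of the letter `x` at position `1` of a word. -/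
def ins1 {m : ℕ} (x : Bool) (w : Fin (m+1) → Bool) : Fin (m+2) → Bool :=
  fun i => if (i:ℕ) = 0 then w 0 else if h : (i:ℕ) = 1 then x
    else w ⟨(i:ℕ) - 1, by omega⟩

lemma ins1_at0 {m : ℕ} (x : Bool) (w : Fin (m+1) → Bool) (i : Fin (m+2))
    (h : (i:ℕ) = 0) : ins1 x w i = w 0 := by simp [ins1, h]

lemma ins1_at1 {m : ℕ} (x : Bool) (w : Fin (m+1) → Bool) (i : Fin (m+2))
    (h : (i:ℕ) = 1) : ins1 x w i = x := by simp [ins1, h]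

lemma ins1_big {m : ℕ} (x : Bool) (w : Fin (m+1) → Bool) (i : Fin (m+2))
    (j : Fin (m+1)) (hj : 1 ≤ (j:ℕ)) (h : (i:ℕ) = (j:ℕ)+1) :
    ins1 x w i = w j := by
  have h0 : ¬ (i:ℕ) = 0 := by omega
  have h1 : ¬ (i:ℕ) = 1 := by omega
  simp only [ins1, if_neg h0, dif_neg h1]
  congr 1
  exact Fin.ext (show (i:ℕ) - 1 = (j:ℕ) by omega)

/-- Deleting the letter at position `1` after inserting at position `1`
recovers the original word. -/
lemma compA {n : ℕ} (x : Bool) (w : Fin (n+2) → Bool) (p : Fin (n+3))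
    (hp : (p:ℕ) = 1) :
    (fun j : Fin (n+2) => ins1 x w (p.succAbove j)) = w := by
  funext j
  rcases Nat.eq_zero_or_pos (j:ℕ) with hj | hj
  · have hv : ((p.succAbove j) : ℕ) = 0 := by
      rw [succAbove_val]; split <;> omega
    rw [ins1_at0 _ _ _ hv]
    have : (0 : Fin (n+2)) = j := Fin.ext (show (0:ℕ) = (j:ℕ) by omega)
    rw [this]
  · exact ins1_big _ _ _ j hj (by rw [succAbove_val]; split <;> omega)

/-- Deleting at a position `≥ 2` commutes with inserting at position `1`. -/
lemma compB {n : ℕ} (x : Bool) (w : Fin (n+2) → Bool) (p : Fin (n+3))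
    (q : Fin (n+2)) (hq : 1 ≤ (q:ℕ)) (hp : (p:ℕ) = (q:ℕ)+1) :
    (fun j : Fin (n+2) => ins1 x w (p.succAbove j))
      = ins1 x (fun j : Fin (n+1) => w (q.succAbove j)) := by
  funext k
  have hk2 : (k:ℕ) < n+2 := k.isLt
  have hq2 : (q:ℕ) < n+2 := q.isLt
  have hsv : ((p.succAbove k):ℕ) = if (k:ℕ) < (q:ℕ)+1 then (k:ℕ) else (k:ℕ)+1 := by
    rw [succAbove_val, hp]
  by_cases h0 : (k:ℕ) = 0
  · rw [ins1_at0 _ _ _ (by rw [hsv]; split <;> omega), ins1_at0 _ _ _ h0]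
    have : q.succAbove (0 : Fin (n+1)) = (0 : Fin (n+2)) := by
      apply Fin.ext
      rw [succAbove_val]
      show (if (0:ℕ) < (q:ℕ) then (0:ℕ) else (0:ℕ)+1) = (0:ℕ)
      split <;> omega
    rw [this]
  · by_cases h1 : (k:ℕ) = 1
    · rw [ins1_at1 _ _ _ (by rw [hsv]; split <;> omega), ins1_at1 _ _ _ h1]
    · have hk : 2 ≤ (k:ℕ) := by omega
      rw [ins1_big x _ k ⟨(k:ℕ)-1, by omega⟩ (show 1 ≤ (k:ℕ)-1 by omega)
        (show (k:ℕ) = ((k:ℕ)-1)+1 by omega)]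
      by_cases hlt : (k:ℕ) < (q:ℕ)+1
      · rw [ins1_big x w _ ⟨(k:ℕ)-1, by omega⟩ (show 1 ≤ (k:ℕ)-1 by omega)
          (by rw [hsv, if_pos hlt]; exact (show (k:ℕ) = ((k:ℕ)-1)+1 by omega))]
        have harg : q.succAbove (⟨(k:ℕ)-1, by omega⟩ : Fin (n+1))
            = (⟨(k:ℕ)-1, by omega⟩ : Fin (n+2)) := by
          apply Fin.ext
          rw [succAbove_val]
          show (if (k:ℕ)-1 < (q:ℕ) then (k:ℕ)-1 else ((k:ℕ)-1)+1) = (k:ℕ)-1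
          split <;> omega
        exact (congrArg w harg).symm
      · rw [ins1_big x w _ ⟨(k:ℕ), by omega⟩ (show 1 ≤ (k:ℕ) by omega)
          (by rw [hsv, if_neg hlt])]
        have harg : q.succAbove (⟨(k:ℕ)-1, by omega⟩ : Fin (n+1))
            = (⟨(k:ℕ), by omega⟩ : Fin (n+2)) := by
          apply Fin.ext
          rw [succAbove_val]
          show (if (k:ℕ)-1 < (q:ℕ) then (k:ℕ)-1 else ((k:ℕ)-1)+1) = (k:ℕ)
          split <;> omega
        exact (congrArg w harg).symm
end Fin

section Helpers
variable (K : Type) [Field K] [CharZero K]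

lemma sigmaRev_add (n : ℕ) (X Y : Wd K n) :
    sigmaRev K n (X + Y) = sigmaRev K n X + sigmaRev K n Y := by
  funext w; simp [sigmaRev]; ring

lemma sigmaRev_sub (n : ℕ) (X Y : Wd K n) :
    sigmaRev K n (X - Y) = sigmaRev K n X - sigmaRev K n Y := by
  funext w; simp [sigmaRev]; ring

lemma sigmaRev_smul (n : ℕ) (c : K) (X : Wd K n) :
    sigmaRev K n (c • X) = c • sigmaRev K n X := by
  funext w; simp [sigmaRev, smul_eq_mul]; ring

lemma sigmaRev_sigmaRev (n : ℕ) (X : Wd K n) :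
    sigmaRev K n (sigmaRev K n X) = X := by
  funext w
  simp only [sigmaRev, Fin.rev_rev, Bool.not_not]
  rw [← mul_assoc, ← pow_add, Even.neg_one_pow ⟨_, rfl⟩, one_mul]

/-- The map `Z ↦ Z + σ(Z)` as a linear map. -/
def Lsig (n : ℕ) : Wd K n →ₗ[K] Wd K n where
  toFun Z := Z + sigmaRev K n Z
  map_add' X Y := by
    show (X + Y) + sigmaRev K n (X + Y) = (X + sigmaRev K n X) + (Y + sigmaRev K n Y)
    rw [sigmaRev_add]; abel
  map_smul' c X := by
    show (c • X) + sigmaRev K n (c • X) = c • (X + sigmaRev K n X)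
    rw [sigmaRev_smul, smul_add]

/-- Membership in the relation module is equivalent to being killed by
averaging over `S₂`. -/
lemma mem_Nsig_iff (n : ℕ) (Z : Wd K n) :
    Z ∈ Nsig K n ↔ Z + sigmaRev K n Z = 0 := by
  constructor
  · intro hZ
    have hle : Nsig K n ≤ LinearMap.ker (Lsig K n) := by
      apply Submodule.span_le.mpr
      rintro W ⟨Y, rfl⟩
      simp only [SetLike.mem_coe, LinearMap.mem_ker]
      show (Y - sigmaRev K n Y) + sigmaRev K n (Y - sigmaRev K n Y) = 0
      rw [sigmaRev_sub, sigmaRev_sigmaRev]; abel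
    exact LinearMap.mem_ker.mp (hle hZ)
  · intro h
    apply Submodule.subset_span
    refine ⟨(2⁻¹ : K) • Z, ?_⟩
    funext w
    have hw := congrFun h w
    simp only [Pi.add_apply, Pi.zero_apply] at hw
    have h2 := congrFun (sigmaRev_smul K n (2⁻¹ : K) Z) w
    rw [Pi.sub_apply, h2]
    simp only [Pi.smul_apply, smul_eq_mul]
    have h2ne : (2:K) ≠ 0 := two_ne_zero
    field_simp
    linear_combination hw

lemma b3_add (n : ℕ) (X Y : Wd K n) :
    b3 K n (X + Y) = b3 K n X + b3 K n Y := by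
  funext w
  simp only [b3, Pi.add_apply, mul_add, Finset.sum_add_distrib]

lemma b3_smul (n : ℕ) (c : K) (X : Wd K n) :
    b3 K n (c • X) = c • b3 K n X := by
  funext w
  simp only [b3, Pi.smul_apply, smul_eq_mul, Finset.mul_sum]
  exact Finset.sum_congr rfl fun p _ => by ring

lemma alg {ι : Type} [Fintype ι] (C F T : ι → K) (xw : K) :
    xw = (∑ q, C q * ((F q + T q)/2))
      + ((xw - ∑ q, C q * F q) + (xw - ∑ q, C q * T q))/2 := by
  have h : ∀ q ∈ (Finset.univ : Finset ι),
      C q * ((F q + T q)/2) = (C q * F q + C q * T q)/2 := fun q _ => by ring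
  rw [Finset.sum_congr rfl h, ← Finset.sum_div, Finset.sum_add_distrib]
  have h2 : (2:K) ≠ 0 := two_ne_zero
  field_simp
  ring

/-- The key summation identity behind the contracting homotopy. -/
lemma key_sum (n : ℕ) (X : Wd K (n+2)) (x : Bool) (w : Fin (n+2) → Bool) :
    (∑ p : Fin (n+2+1), (if (p:ℕ) = 0 ∨ (p:ℕ) = n+2 then (0:K) else (-1:K)^((p:ℕ)+1))
        * X (fun j => ins1 x w (p.succAbove j)))
    = X w - ∑ q : Fin (n+1+1), (if (q:ℕ) = 0 ∨ (q:ℕ) = n+1 then (0:K) else (-1:K)^((q:ℕ)+1))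
        * X (ins1 x (fun j => w (q.succAbove j))) := by
  rw [Fin.sum_univ_succ]
  rw [if_pos (Or.inl rfl : ((0 : Fin (n+2+1)):ℕ) = 0 ∨ ((0 : Fin (n+2+1)):ℕ) = n+2),
    zero_mul, zero_add]
  have hterm : ∀ q : Fin (n+1+1),
      (if ((q.succ : Fin (n+2+1)):ℕ) = 0 ∨ ((q.succ : Fin (n+2+1)):ℕ) = n+2 then (0:K)
          else (-1:K)^(((q.succ : Fin (n+2+1)):ℕ)+1))
        * X (fun j => ins1 x w ((q.succ).succAbove j))
      = (if (q:ℕ) = 0 then X w else 0)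
        - (if (q:ℕ) = 0 ∨ (q:ℕ) = n+1 then (0:K) else (-1:K)^((q:ℕ)+1))
          * X (ins1 x (fun j => w (q.succAbove j))) := by
    intro q
    have hqv : ((q.succ : Fin (n+2+1)):ℕ) = (q:ℕ)+1 := Fin.val_succ q
    have hqle : (q:ℕ) ≤ n+1 := by omega
    rw [hqv]
    by_cases hq0 : (q:ℕ) = 0
    · rw [compA x w q.succ (by rw [hqv]; omega)]
      rw [if_neg (by omega), if_pos hq0, if_pos (Or.inl hq0), zero_mul, sub_zero, hq0]
      norm_num
    · by_cases hqn : (q:ℕ) = n+1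
      · rw [if_pos (by omega : (q:ℕ)+1 = 0 ∨ (q:ℕ)+1 = n+2), if_neg hq0,
          if_pos (Or.inr hqn), zero_mul, zero_mul, sub_zero]
      · rw [compB x w q.succ q (by omega) (by rw [hqv])]
        rw [if_neg (by omega), if_neg (by tauto), if_neg (by tauto)]
        have hpw : (-1:K)^((q:ℕ)+1+1) = -(-1:K)^((q:ℕ)+1) := by rw [pow_succ]; ring
        rw [hpw]
        ring
  rw [Finset.sum_congr rfl (fun q _ => hterm q), Finset.sum_sub_distrib]
  congr 1
  rw [Fin.sum_univ_succ]
  simp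

/-- The contracting homotopy: contract the letter in position `2` against the
functional dual to `a+b`. -/
def hmap (n : ℕ) (Z : Wd K (n+2)) : Wd K (n+1) :=
  fun w => (Z (ins1 false w) + Z (ins1 true w)) / 2

lemma hmap_zero (n : ℕ) : hmap K n 0 = 0 := by
  funext w; simp [hmap]

/-- The homotopy identity `1 = d ∘ h + h ∘ d` in degrees `≥ 2`. -/
lemma homotopy (n : ℕ) (X : Wd K (n+2)) :
    X = b3 K (n+1) (hmap K n X) + hmap K (n+1) (b3 K (n+2) X) := by
  funext w
  have kf := key_sum K n X false w
  have kt := key_sum K n X true w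
  simp only [Pi.add_apply, b3, hmap]
  rw [kf, kt]
  exact alg K _ _ _ _

lemma coeff_rev (n : ℕ) (p : Fin (n+1)) :
    (-1:K)^((n+1)*(n+1-1)/2)
        * (if (p:ℕ) = 0 ∨ (p:ℕ) = n then (0:K) else (-1:K)^((p:ℕ)+1))
    = (if ((p.rev:ℕ)) = 0 ∨ ((p.rev:ℕ)) = n then (0:K) else (-1:K)^(((p.rev:ℕ))+1))
        * (-1:K)^(n*(n-1)/2) := by
  have hp : (p:ℕ) ≤ n := by omega
  have hrev : ((p.rev:ℕ)) = n - (p:ℕ) := by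
    rw [Fin.val_rev]; omega
  rw [hrev]
  by_cases h0 : (p:ℕ) = 0
  · rw [if_pos (Or.inl h0), if_pos (Or.inr (by omega : n - (p:ℕ) = n)), mul_zero, zero_mul]
  · by_cases hn : (p:ℕ) = n
    · rw [if_pos (Or.inr hn), if_pos (Or.inl (by omega : n - (p:ℕ) = 0)), mul_zero, zero_mul]
    · rw [if_neg (by tauto), if_neg (by omega)]
      have hd : (n+1)*(n+1-1)/2 = n*(n-1)/2 + n := by
        have h2 : (n+1)*n = n*(n-1) + 2*n := by
          cases n with
          | zero => rfl
          | succ m => simp [Nat.succ_sub_one]; ring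
        simp only [Nat.add_sub_cancel]
        rw [h2, Nat.add_mul_div_left _ _ (by norm_num : 0 < 2)]
      rw [hd, ← pow_add, ← pow_add]
      have he : n*(n-1)/2 + n + ((p:ℕ)+1) = (n - (p:ℕ) + 1 + n*(n-1)/2) + 2*(p:ℕ) := by
        omega
      rw [he, pow_add, pow_mul]
      norm_num

/-- The differential commutes with the `S₂`-action. -/
lemma sigma_b3 (n : ℕ) (X : Wd K n) :
    sigmaRev K (n+1) (b3 K n X) = b3 K n (sigmaRev K n X) := by
  funext w
  simp only [sigmaRev, b3]
  rw [Finset.mul_sum]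
  refine Fintype.sum_bijective Fin.rev Fin.rev_bijective _ _ (fun p => ?_)
  simp only [Fin.rev_succAbove]
  have hc := coeff_rev K n p
  linear_combination (X fun j => !w ((Fin.rev p).succAbove (Fin.rev j))) * hc

end Helpers

/-- The complex of coinvariants `P_{S₂}` of `P = (T(V), b₃)` under the
`S₂`-action is acyclic (phrased at the level of representatives: an element of
`V^{⊗n}` is zero in the coinvariants iff it lies in `Nsig K n`). -/
theorem P_coinvariants_acyclic (K : Type) [Field K] [CharZero K] :
    -- vanishing at degree 0 (where the S₂-action is trivial)
    (∀ c : K, b3zero K c ∈ Nsig K 1 → c = 0) ∧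
    -- vanishing at degree 1
    (∀ X : Wd K 1, b3 K 1 X ∈ Nsig K 2 → ∃ c : K, X - b3zero K c ∈ Nsig K 1) ∧
    -- vanishing at degrees ≥ 2
    (∀ n : ℕ, ∀ X : Wd K (n + 2), b3 K (n + 2) X ∈ Nsig K (n + 3) →
      ∃ Y : Wd K (n + 1), X - b3 K (n + 1) Y ∈ Nsig K (n + 2)) := by
  have hfin1 : ∀ j : Fin 1, j = 0 := fun j => Fin.ext (Nat.lt_one_iff.mp j.isLt)
  refine ⟨?_, ?_, ?_⟩
  · -- degree 0
    intro c hc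
    have h := (mem_Nsig_iff K 1 _).mp hc
    have hw := congrFun h (fun _ => false)
    simp only [Pi.add_apply, Pi.zero_apply, b3zero, sigmaRev] at hw
    norm_num at hw
    have h2 : (2:K) * c = 0 := by linear_combination 2 * hw
    exact (mul_eq_zero.mp h2).resolve_left two_ne_zero
  · -- degree 1
    intro X _
    refine ⟨X (fun _ => false) + X (fun _ => true), ?_⟩
    rw [mem_Nsig_iff]
    funext w
    have hXw : X w = X (fun _ => w 0) :=
      congrArg X (funext fun j => by rw [hfin1 j])
    have hrev : (fun j : Fin 1 => ! w (Fin.rev j)) = (fun _ : Fin 1 => ! w 0) :=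
      funext fun j => by rw [hfin1 (Fin.rev j)]
    simp only [Pi.add_apply, Pi.sub_apply, Pi.zero_apply, sigmaRev, b3zero]
    rw [hXw, hrev]
    norm_num
    cases hw : w 0 with
    | false => simp only [hw, Bool.not_false]; ring
    | true => simp only [hw, Bool.not_true]; ring
  · -- degrees ≥ 2
    intro n X hX
    have hb : b3 K (n+2) X + sigmaRev K (n+3) (b3 K (n+2) X) = 0 :=
      (mem_Nsig_iff K _ _).mp hX
    set E : Wd K (n+2) := (2⁻¹ : K) • (X + sigmaRev K (n+2) X) with hE
    have h1 : b3 K (n+2) (sigmaRev K (n+2) X) = sigmaRev K (n+3) (b3 K (n+2) X) :=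
      (sigma_b3 K (n+2) X).symm
    have hbE : b3 K (n+2) E = 0 := by
      rw [hE, b3_smul, b3_add, h1, hb, smul_zero]
    have h0 : hmap K (n+1) (b3 K (n+2) E) = 0 := by
      rw [hbE]; exact hmap_zero K (n+1)
    have hY : E = b3 K (n+1) (hmap K n E) := by
      calc E = b3 K (n+1) (hmap K n E) + hmap K (n+1) (b3 K (n+2) E) := homotopy K n E
        _ = b3 K (n+1) (hmap K n E) := by rw [h0, add_zero]
    refine ⟨hmap K n E, ?_⟩
    rw [mem_Nsig_iff, ← hY]
    have hsE : sigmaRev K (n+2) E = E := by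
      rw [hE, sigmaRev_smul, sigmaRev_add, sigmaRev_sigmaRev,
        add_comm (sigmaRev K (n+2) X) X]
    rw [sigmaRev_sub, hsE, hE]
    funext w
    simp only [Pi.add_apply, Pi.sub_apply, Pi.smul_apply, Pi.zero_apply, smul_eq_mul]
    ring
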